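/- For every α ∈ (0, 1) there exists a positive constant C such that for all natural numbers K ≥ 2, ∑_{n=4}^{⌊K^α⌋} ∑_{j=2}^{n−2} [ (K − n + j − 1)!·(n − j + 1)! / (K^{j−1}·j!·(K − j)!) ] · C(n + K − 1, K) · (j/K)^n ≤ C·K^{−3+2α}. -/

import Mathlib

open Finset Nat



-- L_up: ascending factorial bounded by power
theorem lem_up (K b : ℕ) : ∀ d : ℕ, b + d ≤ K → (b+d)! ≤ b ! * K ^ d := by
  intro d
  induction d with
  | zero => simp
  | succ d ih =>
    intro h
    have h1 : b + d ≤ K := by omega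
    calc (b + (d+1))! = (b + d + 1) * (b + d)! := by rw [show b + (d+1) = (b+d)+1 from rfl, Nat.factorial_succ]
    _ ≤ K * (b ! * K ^ d) := Nat.mul_le_mul (by omega) (ih h1)
    _ = b ! * K ^ (d+1) := by ring

theorem lem_step1 (K : ℕ) : ∀ d : ℕ, d ≤ K → (K+d)! ≤ K ! * (2*K) ^ d := by
  intro d
  induction d with
  | zero => simp
  | succ d ih =>
    intro h
    calc (K + (d+1))! = (K + d + 1) * (K + d)! := by rw [show K + (d+1) = (K+d)+1 from rfl, Nat.factorial_succ]
    _ ≤ (2*K) * (K ! * (2*K) ^ d) := Nat.mul_le_mul (by omega) (ih (by omega))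
    _ = K ! * (2*K) ^ (d+1) := by ring

theorem lem_down (K a : ℕ) (ha : K ≤ 2*(a+1)) : ∀ d : ℕ, K ^ d * a ! ≤ 2 ^ d * (a+d)! := by
  intro d
  induction d with
  | zero => simp
  | succ d ih =>
    calc K ^ (d+1) * a ! = K * (K ^ d * a !) := by ring
    _ ≤ K * (2 ^ d * (a+d)!) := Nat.mul_le_mul_left _ ih
    _ ≤ (2 * (a+d+1)) * (2 ^ d * (a+d)!) := Nat.mul_le_mul_right _ (by omega)
    _ = 2 ^ (d+1) * ((a+d+1) * (a+d)!) := by ring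
    _ = 2 ^ (d+1) * (a+(d+1))! := by rw [show a + (d+1) = (a+d)+1 from rfl, Nat.factorial_succ]

theorem key1 (K n j : ℕ) (hn : 4 ≤ n) (hj : 2 ≤ j) (hjn : j + 2 ≤ n) (hKn : 2*n ≤ K) :
    (K-n+j-1)! * K^(n+1) ≤ 2^n * ((K-j)! * K^(2*j)) := by
  rcases le_or_gt (2*j) n with hc | hc
  · -- case II: K-n+j-1 ≤ K-j, use lem_down with a = K-n+j-1, d = n+1-2*j
    have h := lem_down K (K-n+j-1) (by omega) (n+1-2*j)
    have he : (K-n+j-1) + (n+1-2*j) = K - j := by omega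
    rw [he] at h
    -- h : K ^ (n+1-2*j) * (K-n+j-1)! ≤ 2 ^ (n+1-2*j) * (K-j)!
    have h2 : K ^ (n+1) = K ^ (n+1-2*j) * K ^ (2*j) := by
      rw [← pow_add]; congr 1; omega
    calc (K-n+j-1)! * K^(n+1) = (K ^ (n+1-2*j) * (K-n+j-1)!) * K ^ (2*j) := by rw [h2]; ring
    _ ≤ (2 ^ (n+1-2*j) * (K-j)!) * K ^ (2*j) := Nat.mul_le_mul_right _ h
    _ ≤ 2^n * ((K-j)! * K^(2*j)) := by
        rw [← mul_assoc]
        exact Nat.mul_le_mul_right _ (Nat.mul_le_mul_right _ (Nat.pow_le_pow_right (by norm_num) (by omega)))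
  · -- case I: (K-j) + (2*j - n - 1) = K-n+j-1 ≤ K
    have h := lem_up K (K-j) (2*j-n-1) (by omega)
    have he : (K-j) + (2*j-n-1) = K-n+j-1 := by omega
    rw [he] at h
    calc (K-n+j-1)! * K^(n+1) ≤ ((K-j)! * K ^ (2*j-n-1)) * K^(n+1) := Nat.mul_le_mul_right _ h
    _ = (K-j)! * K ^ (2*j) := by rw [mul_assoc, ← pow_add]; congr 2; omega
    _ ≤ 2^n * ((K-j)! * K^(2*j)) := Nat.le_mul_of_pos_left _ (by positivity)



theorem succ_pow_le (j : ℕ) : ((j:ℝ)+1)^j ≤ 3 * (j:ℝ)^j := by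
  rcases Nat.eq_zero_or_pos j with h | h
  · subst h; norm_num
  · have hj : (0:ℝ) < j := by exact_mod_cast h
    have h1 : (j:ℝ) + 1 = (j:ℝ) * (1 + 1/(j:ℝ)) := by field_simp
    have h2 : (1 + 1/(j:ℝ)) ≤ Real.exp (1/(j:ℝ)) := by
      have := Real.add_one_le_exp (1/(j:ℝ)); linarith
    have h3 : ((j:ℝ)+1)^j ≤ (j:ℝ)^j * (Real.exp (1/(j:ℝ)))^j := by
      rw [h1, mul_pow]
      exact mul_le_mul_of_nonneg_left (pow_le_pow_left₀ (by positivity) h2 j) (by positivity)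
    have h4 : (Real.exp (1/(j:ℝ)))^j = Real.exp 1 := by
      rw [← Real.exp_nat_mul]
      congr 1; field_simp
    have h5 : Real.exp 1 ≤ 3 := by
      have := Real.exp_one_lt_d9; linarith
    calc ((j:ℝ)+1)^j ≤ (j:ℝ)^j * Real.exp 1 := by rw [← h4]; exact h3
    _ ≤ (j:ℝ)^j * 3 := mul_le_mul_of_nonneg_left h5 (by positivity)
    _ = 3 * (j:ℝ)^j := by ring

theorem pow_self_le (j : ℕ) : (j:ℝ)^j ≤ 3^j * (j ! : ℝ) := by
  induction j with
  | zero => norm_num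
  | succ j ih =>
    have h1 : ((j:ℝ)+1)^j ≤ 3 * (j:ℝ)^j := succ_pow_le j
    have hc : ((j:ℕ)+1 : ℝ) = (j:ℝ)+1 := by push_cast; ring
    calc ((j+1:ℕ):ℝ)^(j+1) = ((j:ℝ)+1) * ((j:ℝ)+1)^j := by push_cast; ring
    _ ≤ ((j:ℝ)+1) * (3 * (j:ℝ)^j) := mul_le_mul_of_nonneg_left h1 (by positivity)
    _ ≤ ((j:ℝ)+1) * (3 * (3^j * (j ! : ℝ))) := by
        apply mul_le_mul_of_nonneg_left _ (by positivity)
        exact mul_le_mul_of_nonneg_left ih (by norm_num)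
    _ = 3^(j+1) * (((j:ℝ)+1) * (j ! : ℝ)) := by ring
    _ = 3^(j+1) * ((j+1)! : ℝ) := by rw [Nat.factorial_succ]; push_cast; ring



theorem log12 : Real.log 12 ≤ 3 := by
  rw [Real.log_le_iff_le_exp (by norm_num)]
  have h := Real.exp_one_gt_d9
  have h2 : Real.exp 1 ^ (3:ℕ) = Real.exp 3 := by
    rw [← Real.exp_nat_mul]; norm_num
  calc (12:ℝ) ≤ 2.7182818283^(3:ℕ) := by norm_num
  _ ≤ (Real.exp 1)^(3:ℕ) := by gcongr <;> norm_num [h.le]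
  _ = Real.exp 3 := h2




theorem one_le_mul3 {a b c : ℝ} (ha : 1 ≤ a) (hb : 1 ≤ b) (hc : 1 ≤ c) : 1 ≤ a * b * c := by
  have hab : 1 ≤ a * b := by nlinarith
  nlinarith

set_option maxHeartbeats 2000000 in
theorem master (α : ℝ) (hα : α ∈ Set.Ioo (0:ℝ) 1) :
    ∃ C' : ℝ, 1 ≤ C' ∧ ∀ K n j : ℕ, 4 ≤ n → 2 ≤ j → j + 2 ≤ n →
      ((n:ℝ) ≤ (K:ℝ)^α) → 2*n ≤ K →
      (4:ℝ)^n * ((n-j+1)! : ℝ) * (j:ℝ)^n ≤ C' * (K:ℝ)^(n-j-2) * (j ! : ℝ) * ((n-1)! : ℝ) := by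
  obtain ⟨hα0, hα1⟩ := hα
  obtain ⟨β, hβdef⟩ : ∃ β:ℝ, β = 1 - α := ⟨_, rfl⟩
  have hβ : 0 < β := by rw [hβdef]; linarith
  obtain ⟨N, hNa, hNb, hNc⟩ : ∃ N : ℕ, Real.exp (12/β) ≤ (N:ℝ) ∧ 63701000 ≤ N ∧ 8/β ≤ (N:ℝ) := by
    refine ⟨⌈Real.exp (12/β)⌉₊ + 63701000 + ⌈8/β⌉₊, ?_, by omega, ?_⟩
    · calc Real.exp (12/β) ≤ (⌈Real.exp (12/β)⌉₊ : ℝ) := Nat.le_ceil _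
      _ ≤ _ := by
          have : ⌈Real.exp (12/β)⌉₊ ≤ ⌈Real.exp (12/β)⌉₊ + 63701000 + ⌈(8/β:ℝ)⌉₊ := by omega
          exact_mod_cast this
    · calc (8/β : ℝ) ≤ (⌈(8/β:ℝ)⌉₊ : ℝ) := Nat.le_ceil _
      _ ≤ _ := by exact_mod_cast (by omega : ⌈(8/β:ℝ)⌉₊ ≤ ⌈Real.exp (12/β)⌉₊ + 63701000 + ⌈(8/β:ℝ)⌉₊)
  have hN1 : 1 ≤ N := by omega
  have hCge1 : (1:ℝ) ≤ (4:ℝ)^N * (N ! : ℝ) * (N:ℝ)^N := by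
    refine one_le_mul3 (one_le_pow₀ (by norm_num)) ?_ (one_le_pow₀ (by exact_mod_cast hN1))
    exact_mod_cast Nat.one_le_iff_ne_zero.mpr (Nat.factorial_ne_zero N)
  refine ⟨(4:ℝ)^N * (N ! : ℝ) * (N:ℝ)^N, hCge1, ?_⟩
  intro K n j hn hj hjn hKα hKn
  obtain ⟨m, hmdef⟩ : ∃ m:ℕ, m = n - j := ⟨_, rfl⟩
  have hm2 : 2 ≤ m := by omega
  have e1 : n - j + 1 = m + 1 := by omega
  have e2 : n - j - 2 = m - 2 := by omega
  rw [e1, e2]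
  have hnK : n ≤ K := by omega
  have hK2 : 2 ≤ K := by omega
  have hKpos : (0:ℝ) < K := by exact_mod_cast (by omega : 0 < K)
  have hnpos : (0:ℝ) < n := by exact_mod_cast (by omega : 0 < n)
  -- trivial lower bounds on RHS pieces
  have hKm1 : (1:ℝ) ≤ (K:ℝ)^(m-2) := one_le_pow₀ (by exact_mod_cast (by omega : 1 ≤ K))
  have hj1 : (1:ℝ) ≤ (j ! : ℝ) := by exact_mod_cast Nat.one_le_iff_ne_zero.mpr (Nat.factorial_ne_zero j)
  have hn1f : (1:ℝ) ≤ ((n-1)! : ℝ) := by exact_mod_cast Nat.one_le_iff_ne_zero.mpr (Nat.factorial_ne_zero (n-1))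
  rcases lt_or_ge n N with hsmall | hlarge
  · -- small n : crude bound
    have l1 : (4:ℝ)^n ≤ (4:ℝ)^N := pow_le_pow_right₀ (by norm_num) (by omega)
    have l2 : ((m+1)! : ℝ) ≤ (N ! : ℝ) := by
      exact_mod_cast Nat.factorial_le (by omega)
    have l3 : (j:ℝ)^n ≤ (N:ℝ)^N := by
      calc (j:ℝ)^n ≤ (N:ℝ)^n := by
            apply pow_le_pow_left₀ (by positivity)
            exact_mod_cast (by omega : j ≤ N)
      _ ≤ (N:ℝ)^N := pow_le_pow_right₀ (by exact_mod_cast (by omega : 1 ≤ N)) (by omega)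
    have lhs_le : (4:ℝ)^n * ((m+1)! : ℝ) * (j:ℝ)^n ≤ (4:ℝ)^N * (N ! : ℝ) * (N:ℝ)^N := by
      have h4 : (0:ℝ) ≤ (4:ℝ)^n := by positivity
      have hf : (0:ℝ) ≤ ((m+1)! : ℝ) := by positivity
      have := mul_le_mul (mul_le_mul l1 l2 hf (by positivity)) l3 (by positivity) (by positivity)
      exact this
    calc (4:ℝ)^n * ((m+1)! : ℝ) * (j:ℝ)^n ≤ (4:ℝ)^N * (N ! : ℝ) * (N:ℝ)^N := lhs_le
    _ ≤ ((4:ℝ)^N * (N ! : ℝ) * (N:ℝ)^N) * ((K:ℝ)^(m-2) * (j ! : ℝ) * ((n-1)! : ℝ)) :=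
        le_mul_of_one_le_right (by positivity) (one_le_mul3 hKm1 hj1 hn1f)
    _ = (4:ℝ)^N * (N ! : ℝ) * (N:ℝ)^N * (K:ℝ)^(m-2) * (j ! : ℝ) * ((n-1)! : ℝ) := by ring
  · -- large n : sharp bound with constant 1
    -- numeric consequences of n ≥ N
    have hNn : (N:ℝ) ≤ (n:ℝ) := by exact_mod_cast hlarge
    have hnN1 : Real.exp (12/β) ≤ (n:ℝ) := le_trans hNa hNn
    have hn63 : 63701000 ≤ n := by omega
    have hn8β : 8 ≤ β * (n:ℝ) := by
      have := (div_le_iff₀ hβ).mp (le_trans hNc hNn)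
      linarith
    have hlogn : 12/β ≤ Real.log n := by
      calc 12/β = Real.log (Real.exp (12/β)) := (Real.log_exp _).symm
      _ ≤ Real.log n := Real.log_le_log (Real.exp_pos _) hnN1
    -- main chain pieces
    have hjn' : (j:ℝ)^n = (j:ℝ)^j * (j:ℝ)^m := by
      rw [← pow_add]; congr 1; omega
    have h3j : (j:ℝ)^j ≤ (3:ℝ)^n * (j ! : ℝ) := by
      calc (j:ℝ)^j ≤ 3^j * (j ! : ℝ) := pow_self_le j
      _ ≤ 3^n * (j ! : ℝ) := by
          apply mul_le_mul_of_nonneg_right (pow_le_pow_right₀ (by norm_num) (by omega)) (by positivity)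
    have hjm : (j:ℝ)^m ≤ (n:ℝ)^m :=
      pow_le_pow_left₀ (by positivity) (by exact_mod_cast (by omega : j ≤ n)) m
    -- reduce to key inequality  12^n * (m+1)! * n^m ≤ K^(m-2) * (n-1)!
    have key : (12:ℝ)^n * ((m+1)! : ℝ) * (n:ℝ)^m ≤ (K:ℝ)^(m-2) * ((n-1)! : ℝ) := by
      rcases le_or_gt (2*j) n with hA | hB
      · -- Case A
        have hn2m : (n:ℝ) ≤ 2 * (m:ℝ) := by exact_mod_cast (by omega : n ≤ 2*m)
        have hfac : ((m+1)! : ℝ) ≤ ((n-1)! : ℝ) := by exact_mod_cast Nat.factorial_le (by omega)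
        have keyA : (12:ℝ)^n * (n:ℝ)^m ≤ (K:ℝ)^(m-2) := by
          -- via real powers
          have hK1α : (n:ℝ)^(1/α) ≤ (K:ℝ) := by
            have h0 := Real.rpow_le_rpow (by positivity) hKα (by positivity : (0:ℝ) ≤ 1/α)
            rwa [← Real.rpow_mul hKpos.le, mul_one_div, div_self hα0.ne', Real.rpow_one] at h0
          have step1 : ((n:ℝ)^(1/α))^((m-2:ℕ):ℝ) ≤ (K:ℝ)^((m-2:ℕ):ℝ) :=
            Real.rpow_le_rpow (by positivity) hK1α (by positivity)
          have step2 : ((n:ℝ)^(1/α))^((m-2:ℕ):ℝ) = (n:ℝ)^(((m-2:ℕ):ℝ)/α) := by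
            rw [← Real.rpow_mul hnpos.le]; congr 1; field_simp
          have hc : ((m-2:ℕ):ℝ) = (m:ℝ) - 2 := by
            rw [Nat.cast_sub hm2]; norm_num
          obtain ⟨q, hqdef⟩ : ∃ q:ℝ, q = ((m:ℝ) - 2)/α - (m:ℝ) := ⟨_, rfl⟩
          have hq4 : β * (n:ℝ)/4 ≤ q := by
            have hβn2m : β * (n:ℝ) ≤ β * (2*(m:ℝ)) := mul_le_mul_of_nonneg_left hn2m hβ.le
            have hβm : 4 ≤ β * m := by nlinarith
            have heq1 : q = (β * (m:ℝ) - 2)/α := by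
              rw [hqdef, hβdef]; field_simp; ring
            have h1 : β * (m:ℝ) - 2 ≤ q := by
              rw [heq1, le_div_iff₀ hα0]; nlinarith
            nlinarith
          have hsplit : (n:ℝ)^(((m-2:ℕ):ℝ)/α) = (n:ℝ)^((m:ℕ):ℝ) * (n:ℝ)^q := by
            rw [← Real.rpow_add hnpos]; congr 1
            rw [hc, hqdef]; push_cast; ring
          have h12 : (12:ℝ)^n ≤ (n:ℝ)^q := by
            have hq : (β * n/4 : ℝ) ≤ q := hq4
            have hlog : (n:ℝ) * Real.log 12 ≤ (β*n/4) * Real.log n := by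
              have h1 : Real.log 12 ≤ 3 := log12
              have h2 : 12 ≤ β * Real.log n := by
                have := (div_le_iff₀ hβ).mp hlogn; linarith [mul_comm β (Real.log n)]
              have hn0 : (0:ℝ) ≤ n := hnpos.le
              nlinarith [Real.log_nonneg (by exact_mod_cast (by omega : 1 ≤ n) : (1:ℝ) ≤ n)]
            calc (12:ℝ)^n = Real.exp ((n:ℝ) * Real.log 12) := by
                  rw [Real.exp_nat_mul, Real.exp_log (by norm_num)]
            _ ≤ Real.exp ((β*n/4) * Real.log n) := Real.exp_le_exp.mpr hlog
            _ = (n:ℝ)^(β*n/4 : ℝ) := by rw [Real.rpow_def_of_pos hnpos]; ring_nf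
            _ ≤ (n:ℝ)^q := Real.rpow_le_rpow_of_exponent_le (by exact_mod_cast (by omega : 1 ≤ n)) hq
          calc (12:ℝ)^n * (n:ℝ)^m ≤ (n:ℝ)^q * (n:ℝ)^m := by
                apply mul_le_mul_of_nonneg_right h12 (by positivity)
          _ = (n:ℝ)^(((m-2:ℕ):ℝ)/α) := by
                rw [hsplit, ← Real.rpow_natCast (n:ℝ) m]; ring
          _ ≤ (K:ℝ)^((m-2:ℕ):ℝ) := step2 ▸ step1
          _ = (K:ℝ)^(m-2:ℕ) := Real.rpow_natCast _ _
        calc (12:ℝ)^n * ((m+1)! : ℝ) * (n:ℝ)^m = ((12:ℝ)^n * (n:ℝ)^m) * ((m+1)! : ℝ) := by ring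
        _ ≤ (K:ℝ)^(m-2) * ((n-1)! : ℝ) := by
            apply mul_le_mul keyA hfac (by positivity) (by positivity)
      · -- Case B : n + 1 ≤ 2 j
        have hfacsum : ((m+1)! : ℝ) * ((j-2)! : ℝ) ≤ ((n-1)! : ℝ) := by
          have hd := Nat.factorial_mul_factorial_dvd_factorial_add (m+1) (j-2)
          have he : (m+1) + (j-2) = n-1 := by omega
          rw [he] at hd
          exact_mod_cast Nat.le_of_dvd (Nat.factorial_pos _) hd
        have hkeyB : (12:ℝ)^n * (n:ℝ)^2 ≤ ((j-2)! : ℝ) := by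
          set u : ℕ := n/4 + 1 with hudef
          have huj : u ≤ j - 2 := by omega
          have hun : n ≤ 4*u := by omega
          have hu48 : (48:ℝ)^4 ≤ (u:ℝ)/3 := by
            have : (15925250:ℕ) ≤ u := by omega
            have h1 : (15925250:ℝ) ≤ (u:ℝ) := by exact_mod_cast this
            norm_num; linarith
          have c1 : (12:ℝ)^n * (n:ℝ)^2 ≤ (48:ℝ)^n := by
            have hn2 : (n:ℝ)^2 ≤ (4:ℝ)^n := by
              have h1 : (n:ℕ) < 2^n := Nat.lt_two_pow_self (n := n)
              have h2 : (n:ℝ) ≤ (2:ℝ)^n := by exact_mod_cast h1.le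
              calc (n:ℝ)^2 ≤ ((2:ℝ)^n)^2 := by
                    apply pow_le_pow_left₀ (by positivity) h2
              _ = (4:ℝ)^n := by rw [← pow_mul, mul_comm, pow_mul]; norm_num
            calc (12:ℝ)^n * (n:ℝ)^2 ≤ (12:ℝ)^n * (4:ℝ)^n := by
                  apply mul_le_mul_of_nonneg_left hn2 (by positivity)
            _ = (48:ℝ)^n := by rw [← mul_pow]; norm_num
          have c2 : (48:ℝ)^n ≤ ((48:ℝ)^4)^u := by
            rw [← pow_mul]
            exact pow_le_pow_right₀ (by norm_num) (by omega)
          have c3 : ((48:ℝ)^4)^u ≤ ((u:ℝ)/3)^u := pow_le_pow_left₀ (by positivity) hu48 u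
          have c4 : ((u:ℝ)/3)^u ≤ ((u)! : ℝ) := by
            have h := pow_self_le u
            rw [div_pow, div_le_iff₀ (by positivity)]
            calc (u:ℝ)^u ≤ 3^u * (u ! : ℝ) := h
            _ = (u ! : ℝ) * 3^u := by ring
          have c5 : ((u)! : ℝ) ≤ ((j-2)! : ℝ) := by exact_mod_cast Nat.factorial_le huj
          exact le_trans (le_trans (le_trans (le_trans c1 c2) c3) c4) c5
        have hKn' : (n:ℝ)^(m-2) ≤ (K:ℝ)^(m-2) :=
          pow_le_pow_left₀ (by positivity) (by exact_mod_cast hnK) _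
        have hnm : (n:ℝ)^m = (n:ℝ)^(m-2) * (n:ℝ)^2 := by
          rw [← pow_add]; congr 1; omega
        calc (12:ℝ)^n * ((m+1)! : ℝ) * (n:ℝ)^m
            = (n:ℝ)^(m-2) * (((12:ℝ)^n * (n:ℝ)^2) * ((m+1)! : ℝ)) := by rw [hnm]; ring
        _ ≤ (n:ℝ)^(m-2) * (((j-2)! : ℝ) * ((m+1)! : ℝ)) := by
            apply mul_le_mul_of_nonneg_left _ (by positivity)
            apply mul_le_mul_of_nonneg_right hkeyB (by positivity)
        _ ≤ (n:ℝ)^(m-2) * ((n-1)! : ℝ) := by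
            apply mul_le_mul_of_nonneg_left _ (by positivity)
            linarith [hfacsum]
        _ ≤ (K:ℝ)^(m-2) * ((n-1)! : ℝ) := by
            apply mul_le_mul_of_nonneg_right hKn' (by positivity)
    -- assemble
    calc (4:ℝ)^n * ((m+1)! : ℝ) * (j:ℝ)^n
        = (4:ℝ)^n * ((m+1)! : ℝ) * ((j:ℝ)^j * (j:ℝ)^m) := by rw [hjn']
    _ ≤ (4:ℝ)^n * ((m+1)! : ℝ) * (((3:ℝ)^n * (j ! : ℝ)) * (n:ℝ)^m) := by
        apply mul_le_mul_of_nonneg_left _ (by positivity)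
        apply mul_le_mul h3j hjm (by positivity) (by positivity)
    _ = ((12:ℝ)^n * ((m+1)! : ℝ) * (n:ℝ)^m) * (j ! : ℝ) := by
        rw [show (12:ℝ)^n = 4^n * 3^n by rw [← mul_pow]; norm_num]; ring
    _ ≤ ((K:ℝ)^(m-2) * ((n-1)! : ℝ)) * (j ! : ℝ) := by
        apply mul_le_mul_of_nonneg_right key (by positivity)
    _ = 1 * (K:ℝ)^(m-2) * (j ! : ℝ) * ((n-1)! : ℝ) := by ring
    _ ≤ (4:ℝ)^N * (N ! : ℝ) * (N:ℝ)^N * (K:ℝ)^(m-2) * (j ! : ℝ) * ((n-1)! : ℝ) := by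
        apply mul_le_mul_of_nonneg_right _ (by positivity)
        apply mul_le_mul_of_nonneg_right _ (by positivity)
        apply mul_le_mul_of_nonneg_right hCge1 (by positivity)



theorem term_bound (α : ℝ) (C' : ℝ) (hC' : 1 ≤ C')
    (hmaster : ∀ K n j : ℕ, 4 ≤ n → 2 ≤ j → j + 2 ≤ n → ((n:ℝ) ≤ (K:ℝ)^α) → 2*n ≤ K →
      (4:ℝ)^n * ((n-j+1)! : ℝ) * (j:ℝ)^n ≤ C' * (K:ℝ)^(n-j-2) * (j ! : ℝ) * ((n-1)! : ℝ))
    (K n j : ℕ) (hn : 4 ≤ n) (hj : 2 ≤ j) (hjn : j + 2 ≤ n)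
    (hKα : (n:ℝ) ≤ (K:ℝ)^α) (hKn : 2*n ≤ K) :
    ((K - n + j - 1)! : ℝ) * ((n - j + 1)! : ℝ) /
        ((K:ℝ) ^ (j - 1) * (j ! : ℝ) * ((K - j)! : ℝ)) *
      (((n + K - 1).choose K : ℕ) : ℝ) * ((j:ℝ) / (K:ℝ)) ^ n
      ≤ C' / (K:ℝ)^3 := by
  have hK2 : 2 ≤ K := by omega
  have hKpos : (0:ℝ) < K := by exact_mod_cast (by omega : 0 < K)
  set A : ℕ := K - n + j - 1 with hA
  set B : ℕ := n - j + 1 with hB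
  set Ch : ℕ := (n + K - 1).choose K with hCh
  have hQpos : (0:ℝ) < (K:ℝ)^(j-1) * (j ! : ℝ) * ((K-j)! : ℝ) * (K:ℝ)^n := by positivity
  have heq : ((A ! : ℝ) * (B ! : ℝ) / ((K:ℝ)^(j-1) * (j ! : ℝ) * ((K-j)! : ℝ))) * (Ch:ℝ) *
      ((j:ℝ)/(K:ℝ))^n
      = ((A ! : ℝ) * (B ! : ℝ) * (Ch:ℝ) * (j:ℝ)^n) /
        ((K:ℝ)^(j-1) * (j ! : ℝ) * ((K-j)! : ℝ) * (K:ℝ)^n) := by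
    rw [div_pow]; ring
  rw [heq, div_le_div_iff₀ hQpos (by positivity)]
  -- now: A! * B! * Ch * j^n * K^3 ≤ C' * (K^{j-1} * j! * (K-j)! * K^n)
  have hchoose : (Ch:ℝ) * (K ! : ℝ) * ((n-1)! : ℝ) = ((n+K-1)! : ℝ) := by
    have h := Nat.choose_mul_factorial_mul_factorial (by omega : K ≤ n + K - 1)
    have he : n + K - 1 - K = n - 1 := by omega
    rw [he] at h
    exact_mod_cast congrArg (Nat.cast : ℕ → ℝ) h
  have hstep1 : ((n+K-1)! : ℝ) ≤ (K ! : ℝ) * 2^(n-1) * (K:ℝ)^(n-1) := by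
    have h := lem_step1 K (n-1) (by omega)
    have he : K + (n-1) = n + K - 1 := by omega
    rw [he] at h
    calc ((n+K-1)! : ℝ) ≤ ((K ! * (2*K)^(n-1) : ℕ) : ℝ) := by exact_mod_cast h
    _ = (K ! : ℝ) * 2^(n-1) * (K:ℝ)^(n-1) := by push_cast [mul_pow]; ring
  have hkey1 : (A ! : ℝ) * (K:ℝ)^(n+1) ≤ 2^n * (((K-j)! : ℝ) * (K:ℝ)^(2*j)) := by
    have h := key1 K n j hn hj hjn hKn
    calc (A ! : ℝ) * (K:ℝ)^(n+1) = (((K-n+j-1)! * K^(n+1) : ℕ) : ℝ) := by push_cast [hA]; ring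
    _ ≤ ((2^n * ((K-j)! * K^(2*j)) : ℕ) : ℝ) := by exact_mod_cast h
    _ = 2^n * (((K-j)! : ℝ) * (K:ℝ)^(2*j)) := by push_cast; ring
  have hmast := hmaster K n j hn hj hjn hKα hKn
  -- multiply-out bookkeeping
  have cancel : ∀ x y : ℝ, x * ((K ! : ℝ) * ((n-1)! : ℝ) * (K:ℝ)^(n+1)) ≤
      y * ((K ! : ℝ) * ((n-1)! : ℝ) * (K:ℝ)^(n+1)) → x ≤ y := by
    intro x y h
    have hpos : (0:ℝ) < (K ! : ℝ) * ((n-1)! : ℝ) * (K:ℝ)^(n+1) := by positivity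
    exact le_of_mul_le_mul_right h hpos
  apply cancel
  have efin : (n-j-2) + (n+2*j+2) = (j-1) + n + (n+1) := by omega
  calc (A ! : ℝ) * (B ! : ℝ) * (Ch:ℝ) * (j:ℝ)^n * (K:ℝ)^3 *
        ((K ! : ℝ) * ((n-1)! : ℝ) * (K:ℝ)^(n+1))
      = ((Ch:ℝ) * (K ! : ℝ) * ((n-1)! : ℝ)) * ((A ! : ℝ) * (B ! : ℝ) * (j:ℝ)^n) *
        ((K:ℝ)^3 * (K:ℝ)^(n+1)) := by ring
    _ = ((n+K-1)! : ℝ) * ((A ! : ℝ) * (B ! : ℝ) * (j:ℝ)^n) * ((K:ℝ)^3 * (K:ℝ)^(n+1)) := by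
        rw [hchoose]
    _ ≤ ((K ! : ℝ) * 2^(n-1) * (K:ℝ)^(n-1)) * ((A ! : ℝ) * (B ! : ℝ) * (j:ℝ)^n) *
        ((K:ℝ)^3 * (K:ℝ)^(n+1)) := by
        apply mul_le_mul_of_nonneg_right (mul_le_mul_of_nonneg_right hstep1 (by positivity)) (by positivity)
    _ = ((K ! : ℝ) * 2^(n-1) * (B ! : ℝ) * (j:ℝ)^n) * ((K:ℝ)^(n-1) * (K:ℝ)^3) *
        ((A ! : ℝ) * (K:ℝ)^(n+1)) := by ring
    _ ≤ ((K ! : ℝ) * 2^(n-1) * (B ! : ℝ) * (j:ℝ)^n) * ((K:ℝ)^(n-1) * (K:ℝ)^3) *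
        (2^n * (((K-j)! : ℝ) * (K:ℝ)^(2*j))) := by
        apply mul_le_mul_of_nonneg_left hkey1 (by positivity)
    _ = ((K ! : ℝ) * ((K-j)! : ℝ)) * (2^(n-1) * 2^n) * ((B ! : ℝ) * (j:ℝ)^n) *
        ((K:ℝ)^(n-1) * (K:ℝ)^3 * (K:ℝ)^(2*j)) := by ring
    _ ≤ ((K ! : ℝ) * ((K-j)! : ℝ)) * (4:ℝ)^n * ((B ! : ℝ) * (j:ℝ)^n) *
        ((K:ℝ)^(n-1) * (K:ℝ)^3 * (K:ℝ)^(2*j)) := by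
        apply mul_le_mul_of_nonneg_right (mul_le_mul_of_nonneg_right
          (mul_le_mul_of_nonneg_left ?_ (by positivity)) (by positivity)) (by positivity)
        calc (2:ℝ)^(n-1) * 2^n ≤ 2^n * 2^n := by
              apply mul_le_mul_of_nonneg_right (pow_le_pow_right₀ (by norm_num) (by omega)) (by positivity)
        _ = (4:ℝ)^n := by rw [← mul_pow]; norm_num
    _ = ((K ! : ℝ) * ((K-j)! : ℝ)) * ((4:ℝ)^n * (B ! : ℝ) * (j:ℝ)^n) * (K:ℝ)^(n+2*j+2) := by
        rw [show (K:ℝ)^(n-1) * (K:ℝ)^3 * (K:ℝ)^(2*j) = (K:ℝ)^((n-1)+3+2*j) by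
          rw [pow_add, pow_add]]
        rw [show (n-1)+3+2*j = n+2*j+2 by omega]; ring
    _ ≤ ((K ! : ℝ) * ((K-j)! : ℝ)) * (C' * (K:ℝ)^(n-j-2) * (j ! : ℝ) * ((n-1)! : ℝ)) *
        (K:ℝ)^(n+2*j+2) := by
        apply mul_le_mul_of_nonneg_right (mul_le_mul_of_nonneg_left hmast (by positivity)) (by positivity)
    _ = C' * ((K:ℝ)^(j-1) * (j ! : ℝ) * ((K-j)! : ℝ) * (K:ℝ)^n) *
        ((K ! : ℝ) * ((n-1)! : ℝ) * (K:ℝ)^(n+1)) := by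
        have hp : (K:ℝ)^(n-j-2) * (K:ℝ)^(n+2*j+2) = (K:ℝ)^(j-1) * (K:ℝ)^n * (K:ℝ)^(n+1) := by
          rw [← pow_add, ← pow_add, ← pow_add, efin]
        linear_combination ((K ! : ℝ) * ((K-j)! : ℝ) * C' * (j ! : ℝ) * ((n-1)! : ℝ)) * hp



theorem one_le_mul3' {a b c : ℝ} (ha : 1 ≤ a) (hb : 1 ≤ b) (hc : 1 ≤ c) : 1 ≤ a * b * c := by
  have hab : 1 ≤ a * b := by nlinarith
  nlinarith

set_option maxHeartbeats 2000000 in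
/-- For every `α ∈ (0,1)` there is a positive constant `C` such that for all `K ≥ 2`,
`∑_{n=4}^{⌊K^α⌋} ∑_{j=2}^{n−2} ((K−n+j−1)! (n−j+1)! / (K^{j−1} j! (K−j)!)) C(n+K−1,K) (j/K)^n`
is at most `C K^{−3+2α}`. -/
theorem stmt_8 (α : ℝ) (hα : α ∈ Set.Ioo (0 : ℝ) 1) :
    ∃ C : ℝ, 0 < C ∧ ∀ K : ℕ, 2 ≤ K →
      ∑ n ∈ Icc 4 ⌊(K : ℝ) ^ α⌋₊, ∑ j ∈ Icc 2 (n - 2),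
          ((Nat.factorial (K - n + j - 1) : ℝ) * (Nat.factorial (n - j + 1) : ℝ)) /
              ((K : ℝ) ^ (j - 1) * (Nat.factorial j : ℝ) * (Nat.factorial (K - j) : ℝ)) *
            ((n + K - 1).choose K : ℝ) * ((j : ℝ) / (K : ℝ)) ^ n
        ≤ C * (K : ℝ) ^ (-3 + 2 * α) := by
  obtain ⟨hα0, hα1⟩ := hα
  obtain ⟨C', hC'1, hmaster⟩ := master α ⟨hα0, hα1⟩
  obtain ⟨K₁, hK₁e, hK₁2⟩ : ∃ K₁ : ℕ, Real.exp (1/(1-α)) ≤ (K₁:ℝ) ∧ 2 ≤ K₁ := by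
    refine ⟨⌈Real.exp (1/(1-α))⌉₊ + 2, ?_, by omega⟩
    calc Real.exp (1/(1-α)) ≤ (⌈Real.exp (1/(1-α))⌉₊ : ℝ) := Nat.le_ceil _
    _ ≤ _ := by push_cast; linarith
  set C₂ : ℝ := (K₁:ℝ)^2 * ((K₁ ! : ℕ):ℝ)^2 * ((2*K₁ : ℕ):ℝ)^K₁ with hC₂def
  have hC₂pos : 0 < C₂ := by
    have : (0:ℝ) < (K₁:ℝ) := by exact_mod_cast (by omega : 0 < K₁)
    have h2 : (0:ℝ) < ((K₁ ! : ℕ):ℝ) := by exact_mod_cast Nat.factorial_pos K₁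
    have h3 : (0:ℝ) < ((2*K₁ : ℕ):ℝ) := by exact_mod_cast (by omega : 0 < 2*K₁)
    positivity
  refine ⟨C' + (K₁:ℝ)^3 * C₂, by positivity, ?_⟩
  intro K hK2
  have hKpos : (0:ℝ) < K := by exact_mod_cast (by omega : 0 < K)
  have hK1R : (1:ℝ) ≤ K := by exact_mod_cast (by omega : 1 ≤ K)
  have hrpos : (0:ℝ) < (K:ℝ)^(-3 + 2*α) := Real.rpow_pos_of_pos hKpos _
  set M : ℕ := ⌊(K : ℝ) ^ α⌋₊ with hMdef
  have hMKα : (M:ℝ) ≤ (K:ℝ)^α := Nat.floor_le (by positivity)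
  have hKαK : (K:ℝ)^α ≤ (K:ℝ) := by
    calc (K:ℝ)^α ≤ (K:ℝ)^(1:ℝ) := Real.rpow_le_rpow_of_exponent_le hK1R (by linarith)
    _ = K := Real.rpow_one _
  have hMK : M ≤ K := by
    have : (M:ℝ) ≤ (K:ℝ) := le_trans hMKα hKαK
    exact_mod_cast this
  -- membership facts
  have hmem : ∀ n ∈ Icc 4 M, ∀ j ∈ Icc 2 (n-2),
      4 ≤ n ∧ n ≤ M ∧ 2 ≤ j ∧ j + 2 ≤ n ∧ (n:ℝ) ≤ (K:ℝ)^α := by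
    intro n hn j hj
    rw [mem_Icc] at hn hj
    have h4 : 4 ≤ n := hn.1
    have hnM : n ≤ M := hn.2
    refine ⟨h4, hnM, hj.1, by omega, ?_⟩
    rw [hMdef] at hnM
    exact le_trans (by exact_mod_cast hnM) hMKα
  rcases le_or_gt K₁ K with hbig | hsmall
  · -- large K
    have hlogK : 1/(1-α) ≤ Real.log K := by
      calc 1/(1-α) = Real.log (Real.exp (1/(1-α))) := (Real.log_exp _).symm
      _ ≤ Real.log K := Real.log_le_log (Real.exp_pos _)
          (le_trans hK₁e (by exact_mod_cast hbig))
    have h2Kα : 2 * (K:ℝ)^α ≤ K := by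
      have hK1a : (2:ℝ) ≤ (K:ℝ)^(1-α) := by
        have hlog2 : Real.log 2 ≤ 1 := by
          rw [Real.log_le_iff_le_exp (by norm_num)]
          have := Real.exp_one_gt_d9; linarith
        have h1 : 1 ≤ (1-α) * Real.log K := by
          have := (div_le_iff₀ (by linarith : (0:ℝ) < 1-α)).mp hlogK
          linarith [mul_comm (1-α) (Real.log K)]
        have e0 : (K:ℝ)^(1-α) = Real.exp (Real.log K * (1-α)) := Real.rpow_def_of_pos hKpos _
        have e1 : (2:ℝ) = Real.exp (Real.log 2) := (Real.exp_log (by norm_num)).symm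
        have e2 : Real.exp (Real.log 2) ≤ Real.exp (Real.log K * (1-α)) := by
          apply Real.exp_le_exp.mpr; nlinarith
        rw [e0, e1]; exact e2
      calc 2 * (K:ℝ)^α ≤ (K:ℝ)^(1-α) * (K:ℝ)^α := by
            apply mul_le_mul_of_nonneg_right hK1a (by positivity)
      _ = (K:ℝ)^((1-α)+α) := (Real.rpow_add hKpos _ _).symm
      _ = K := by rw [show (1-α)+α = 1 by ring, Real.rpow_one]
    have hterm : ∀ n ∈ Icc 4 M, ∀ j ∈ Icc 2 (n-2),
        ((K - n + j - 1)! : ℝ) * ((n - j + 1)! : ℝ) /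
          ((K:ℝ) ^ (j - 1) * (j ! : ℝ) * ((K - j)! : ℝ)) *
          (((n + K - 1).choose K : ℕ) : ℝ) * ((j:ℝ) / (K:ℝ)) ^ n ≤ C' / (K:ℝ)^3 := by
      intro n hn j hj
      obtain ⟨h4, hnM, hj2, hjn, hnKα⟩ := hmem n hn j hj
      have h2n : 2*n ≤ K := by
        have : (2*n : ℝ) ≤ (K:ℝ) := by
          calc (2*n:ℝ) = 2*(n:ℝ) := by push_cast; ring
          _ ≤ 2*(K:ℝ)^α := by linarith
          _ ≤ K := h2Kα
        exact_mod_cast this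
      exact term_bound α C' hC'1 hmaster K n j h4 hj2 hjn hnKα h2n
    have hsum : ∑ n ∈ Icc 4 M, ∑ j ∈ Icc 2 (n - 2),
          ((K - n + j - 1)! : ℝ) * ((n - j + 1)! : ℝ) /
            ((K:ℝ) ^ (j - 1) * (j ! : ℝ) * ((K - j)! : ℝ)) *
            (((n + K - 1).choose K : ℕ) : ℝ) * ((j:ℝ) / (K:ℝ)) ^ n
        ≤ (M:ℝ) * ((M:ℝ) * (C' / (K:ℝ)^3)) := by
      have hC'K : 0 ≤ C' / (K:ℝ)^3 := by positivity
      calc _ ≤ ∑ n ∈ Icc 4 M, (M:ℝ) * (C' / (K:ℝ)^3) := by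
            apply Finset.sum_le_sum
            intro n hn
            calc ∑ j ∈ Icc 2 (n - 2), _ ≤ ∑ j ∈ Icc 2 (n-2), (C' / (K:ℝ)^3) :=
                  Finset.sum_le_sum (fun j hj => hterm n hn j hj)
            _ = ((Icc 2 (n-2)).card : ℝ) * (C' / (K:ℝ)^3) := by
                rw [Finset.sum_const, nsmul_eq_mul]
            _ ≤ (M:ℝ) * (C' / (K:ℝ)^3) := by
                apply mul_le_mul_of_nonneg_right _ hC'K
                rw [mem_Icc] at hn
                have : (Icc 2 (n-2)).card ≤ M := by
                  rw [Nat.card_Icc]; omega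
                exact_mod_cast this
      _ = ((Icc 4 M).card : ℝ) * ((M:ℝ) * (C' / (K:ℝ)^3)) := by
            rw [Finset.sum_const, nsmul_eq_mul]
      _ ≤ (M:ℝ) * ((M:ℝ) * (C' / (K:ℝ)^3)) := by
            apply mul_le_mul_of_nonneg_right _ (by positivity)
            have : (Icc 4 M).card ≤ M := by rw [Nat.card_Icc]; omega
            exact_mod_cast this
    apply le_trans hsum
    have hfin : (M:ℝ) * ((M:ℝ) * (C' / (K:ℝ)^3)) ≤ C' * (K:ℝ)^(-3 + 2*α) := by
      have hMnn : (0:ℝ) ≤ M := by positivity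
      calc (M:ℝ) * ((M:ℝ) * (C' / (K:ℝ)^3)) ≤ (K:ℝ)^α * ((K:ℝ)^α * (C' / (K:ℝ)^3)) := by
            apply mul_le_mul hMKα (mul_le_mul hMKα le_rfl (by positivity) (by positivity)) (by positivity) (by positivity)
      _ = C' * ((K:ℝ)^α * (K:ℝ)^α * ((K:ℝ)^(3:ℕ))⁻¹) := by ring
      _ = C' * (K:ℝ)^(-3 + 2*α) := by
            congr 1
            rw [← Real.rpow_add hKpos, ← Real.rpow_natCast (K:ℝ) 3, ← Real.rpow_neg hKpos.le,
              ← Real.rpow_add hKpos]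
            norm_num; ring_nf
    apply le_trans hfin
    apply mul_le_mul_of_nonneg_right _ hrpos.le
    linarith [mul_pos (by positivity : (0:ℝ) < (K₁:ℝ)^3) hC₂pos]
  · -- small K
    have hKK₁ : K ≤ K₁ := by omega
    have hterm : ∀ n ∈ Icc 4 M, ∀ j ∈ Icc 2 (n-2),
        ((K - n + j - 1)! : ℝ) * ((n - j + 1)! : ℝ) /
          ((K:ℝ) ^ (j - 1) * (j ! : ℝ) * ((K - j)! : ℝ)) *
          (((n + K - 1).choose K : ℕ) : ℝ) * ((j:ℝ) / (K:ℝ)) ^ n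
        ≤ ((K₁ ! : ℕ):ℝ)^2 * ((2*K₁ : ℕ):ℝ)^K₁ := by
      intro n hn j hj
      obtain ⟨h4, hnM, hj2, hjn, hnKα⟩ := hmem n hn j hj
      have hnK : n ≤ K := by
        have : (n:ℝ) ≤ (K:ℝ) := le_trans hnKα hKαK
        exact_mod_cast this
      have hD1 : (1:ℝ) ≤ (K:ℝ) ^ (j - 1) * (j ! : ℝ) * ((K - j)! : ℝ) := by
        have a1 : (1:ℝ) ≤ (K:ℝ)^(j-1) := one_le_pow₀ hK1R
        have a2 : (1:ℝ) ≤ (j ! : ℝ) := by exact_mod_cast Nat.one_le_iff_ne_zero.mpr (Nat.factorial_ne_zero j)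
        have a3 : (1:ℝ) ≤ ((K-j)! : ℝ) := by exact_mod_cast Nat.one_le_iff_ne_zero.mpr (Nat.factorial_ne_zero (K-j))
        exact one_le_mul3' a1 a2 a3
      have hfr : ((K - n + j - 1)! : ℝ) * ((n - j + 1)! : ℝ) /
          ((K:ℝ) ^ (j - 1) * (j ! : ℝ) * ((K - j)! : ℝ))
          ≤ ((K - n + j - 1)! : ℝ) * ((n - j + 1)! : ℝ) := by
        apply div_le_self (by positivity) hD1
      have hA : ((K - n + j - 1)! : ℝ) ≤ ((K₁ ! : ℕ):ℝ) := by
        exact_mod_cast Nat.factorial_le (by omega : K - n + j - 1 ≤ K₁)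
      have hB : ((n - j + 1)! : ℝ) ≤ ((K₁ ! : ℕ):ℝ) := by
        exact_mod_cast Nat.factorial_le (by omega : n - j + 1 ≤ K₁)
      have hCh : (((n + K - 1).choose K : ℕ) : ℝ) ≤ ((2*K₁ : ℕ):ℝ)^K₁ := by
        have h1 : (n + K - 1).choose K ≤ (n + K - 1)^K := Nat.choose_le_pow _ _
        have h2 : (n + K - 1)^K ≤ (2*K₁)^K₁ :=
          Nat.pow_le_pow_left (by omega) K |>.trans (Nat.pow_le_pow_right (by omega) hKK₁)
        calc (((n + K - 1).choose K : ℕ) : ℝ) ≤ (((n + K - 1)^K : ℕ):ℝ) := by exact_mod_cast h1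
        _ ≤ (((2*K₁)^K₁ : ℕ):ℝ) := by exact_mod_cast h2
        _ = ((2*K₁ : ℕ):ℝ)^K₁ := by push_cast; ring
      have hjK : ((j:ℝ) / (K:ℝ)) ^ n ≤ 1 := by
        apply pow_le_one₀ (by positivity)
        rw [div_le_one hKpos]
        exact_mod_cast (by omega : j ≤ K)
      have hChnn : (0:ℝ) ≤ (((n + K - 1).choose K : ℕ) : ℝ) := by positivity
      calc ((K - n + j - 1)! : ℝ) * ((n - j + 1)! : ℝ) /
          ((K:ℝ) ^ (j - 1) * (j ! : ℝ) * ((K - j)! : ℝ)) *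
          (((n + K - 1).choose K : ℕ) : ℝ) * ((j:ℝ) / (K:ℝ)) ^ n
          ≤ ((K - n + j - 1)! : ℝ) * ((n - j + 1)! : ℝ) *
            (((n + K - 1).choose K : ℕ) : ℝ) * 1 := by
            apply mul_le_mul (mul_le_mul hfr le_rfl hChnn (by positivity)) hjK (by positivity) (by positivity)
      _ = ((K - n + j - 1)! : ℝ) * ((n - j + 1)! : ℝ) * (((n + K - 1).choose K : ℕ) : ℝ) := by ring
      _ ≤ ((K₁ ! : ℕ):ℝ) * ((K₁ ! : ℕ):ℝ) * ((2*K₁ : ℕ):ℝ)^K₁ := by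
            apply mul_le_mul (mul_le_mul hA hB (by positivity) (by positivity)) hCh (by positivity) (by positivity)
      _ = ((K₁ ! : ℕ):ℝ)^2 * ((2*K₁ : ℕ):ℝ)^K₁ := by ring
    set T₁ : ℝ := ((K₁ ! : ℕ):ℝ)^2 * ((2*K₁ : ℕ):ℝ)^K₁ with hT₁def
    have hT₁nn : 0 ≤ T₁ := by positivity
    have hsum : ∑ n ∈ Icc 4 M, ∑ j ∈ Icc 2 (n - 2),
          ((K - n + j - 1)! : ℝ) * ((n - j + 1)! : ℝ) /
            ((K:ℝ) ^ (j - 1) * (j ! : ℝ) * ((K - j)! : ℝ)) *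
            (((n + K - 1).choose K : ℕ) : ℝ) * ((j:ℝ) / (K:ℝ)) ^ n
        ≤ (M:ℝ) * ((M:ℝ) * T₁) := by
      calc _ ≤ ∑ n ∈ Icc 4 M, (M:ℝ) * T₁ := by
            apply Finset.sum_le_sum
            intro n hn
            calc ∑ j ∈ Icc 2 (n - 2), _ ≤ ∑ j ∈ Icc 2 (n-2), T₁ :=
                  Finset.sum_le_sum (fun j hj => hterm n hn j hj)
            _ = ((Icc 2 (n-2)).card : ℝ) * T₁ := by rw [Finset.sum_const, nsmul_eq_mul]
            _ ≤ (M:ℝ) * T₁ := by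
                apply mul_le_mul_of_nonneg_right _ hT₁nn
                rw [mem_Icc] at hn
                have : (Icc 2 (n-2)).card ≤ M := by rw [Nat.card_Icc]; omega
                exact_mod_cast this
      _ = ((Icc 4 M).card : ℝ) * ((M:ℝ) * T₁) := by rw [Finset.sum_const, nsmul_eq_mul]
      _ ≤ (M:ℝ) * ((M:ℝ) * T₁) := by
            apply mul_le_mul_of_nonneg_right _ (by positivity)
            have : (Icc 4 M).card ≤ M := by rw [Nat.card_Icc]; omega
            exact_mod_cast this
    apply le_trans hsum
    have hMK₁ : (M:ℝ) ≤ (K₁:ℝ) := by exact_mod_cast le_trans hMK hKK₁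
    have hKp3 : ((K:ℝ)^(3:ℕ))⁻¹ ≤ (K:ℝ)^(-3 + 2*α) := by
      have h1 : (K:ℝ)^((-3:ℝ)) ≤ (K:ℝ)^(-3 + 2*α) :=
        Real.rpow_le_rpow_of_exponent_le hK1R (by linarith)
      have h2 : (K:ℝ)^((-3:ℝ)) = ((K:ℝ)^(3:ℕ))⁻¹ := by
        rw [← Real.rpow_natCast (K:ℝ) 3, ← Real.rpow_neg hKpos.le]; norm_num
      linarith [h2 ▸ h1]
    have hKK₁3 : ((K₁:ℝ)^(3:ℕ))⁻¹ ≤ ((K:ℝ)^(3:ℕ))⁻¹ := by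
      apply inv_anti₀ (by positivity)
      apply pow_le_pow_left₀ (by positivity)
      exact_mod_cast hKK₁
    have hK₁pos : (0:ℝ) < K₁ := by exact_mod_cast (by omega : 0 < K₁)
    calc (M:ℝ) * ((M:ℝ) * T₁) ≤ (K₁:ℝ) * ((K₁:ℝ) * T₁) := by
          apply mul_le_mul hMK₁ (mul_le_mul hMK₁ le_rfl hT₁nn (by positivity)) (by positivity) (by positivity)
    _ = C₂ := by rw [hC₂def, hT₁def]; ring
    _ = ((K₁:ℝ)^3 * C₂) * ((K₁:ℝ)^(3:ℕ))⁻¹ := by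
          field_simp
    _ ≤ ((K₁:ℝ)^3 * C₂) * ((K:ℝ)^(3:ℕ))⁻¹ := by
          apply mul_le_mul_of_nonneg_left hKK₁3 (by positivity)
    _ ≤ ((K₁:ℝ)^3 * C₂) * (K:ℝ)^(-3 + 2*α) := by
          apply mul_le_mul_of_nonneg_left hKp3 (by positivity)
    _ ≤ (C' + (K₁:ℝ)^3 * C₂) * (K:ℝ)^(-3 + 2*α) := by
          apply mul_le_mul_of_nonneg_right _ hrpos.le
          linarith
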